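/- Let $F: \mathbb{R}^{\mathbb{Z}} \times \mathbb{R} \times \mathbb{R}^m \to \mathbb{R}^m$ satisfy $|F(w, s, z_1) - F(w, s, z_2)| \le \rho |z_1 - z_2|$ for all $w, s, z_1, z_2$, with $0 < \rho < 1$, and suppose there exist $x \in \mathbb{R}^m$ and $C > 0$ with $|F(\chi, s, x) - x| \le C(1 + |s|)$ for all $\chi, s$. Let $(\varepsilon_t^2)_{t \in \mathbb{Z}}$ be i.i.d. real random variables with $E|\varepsilon_0^2| < \infty$, let $(\chi_t)_{t \in \mathbb{Z}}$ be arbitrary (fixed) environment sequences, and define $\tilde X_0^t := x$, $\tilde X_{j+1}^t := F(\chi_t, \varepsilon_t^2, \cdot) \circ \cdots \circ F(\chi_{t-j}, \varepsilon_{t-j}^2, \cdot)(x)$. Then $\tilde X_j^t$ converges almost surely as $j \to \infty$. -/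

import Mathlib

open MeasureTheory ProbabilityTheory Filter

/-- Almost sure convergence of backward iterations of random contractions
(cf. Diaconis–Freedman): under the contraction and drift conditions on `F`,
the iterates `X̃_j^t` converge a.s. as `j → ∞`. -/
theorem stmt16 {Ω : Type*} {m : ℕ} {F : MeasurableSpace Ω} {μ : Measure Ω}
    [IsProbabilityMeasure μ]
    (Fmap : (ℤ → ℝ) → ℝ → EuclideanSpace ℝ (Fin m) → EuclideanSpace ℝ (Fin m))
    (ρ : ℝ) (hρ0 : 0 < ρ) (hρ1 : ρ < 1)
    (hcontr : ∀ w s z₁ z₂, ‖Fmap w s z₁ - Fmap w s z₂‖ ≤ ρ * ‖z₁ - z₂‖)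
    (x : EuclideanSpace ℝ (Fin m)) (C : ℝ) (hC : 0 < C)
    (hdrift : ∀ χ s, ‖Fmap χ s x - x‖ ≤ C * (1 + |s|))
    (ε2 : ℤ → Ω → ℝ) (hmeas : ∀ t, Measurable (ε2 t))
    (hindep : iIndepFun ε2 μ)
    (hident : ∀ t : ℤ, μ.map (ε2 t) = μ.map (ε2 0))
    (hint : Integrable (ε2 0) μ)
    (χ : ℤ → ℤ → ℝ)
    (Xtil : ℤ → ℕ → Ω → EuclideanSpace ℝ (Fin m))
    (hX0 : ∀ t ω, Xtil t 0 ω = x)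
    (hXrec : ∀ t : ℤ, ∀ j : ℕ, ∀ ω, Xtil t (j + 1) ω = Fmap (χ t) (ε2 t ω) (Xtil (t - 1) j ω)) :
    ∀ t : ℤ, ∀ᵐ ω ∂μ, ∃ L : EuclideanSpace ℝ (Fin m),
      Tendsto (fun j => Xtil t j ω) atTop (nhds L) := by
  intro t
  -- key pointwise bound
  have key : ∀ j : ℕ, ∀ s : ℤ, ∀ ω,
      ‖Xtil s (j + 1) ω - Xtil s j ω‖ ≤ ρ ^ j * (C * (1 + |ε2 (s - j) ω|)) := by
    intro j
    induction j with
    | zero =>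
      intro s ω
      rw [hXrec s 0 ω, hX0, hX0]
      simpa using hdrift (χ s) (ε2 s ω)
    | succ j ih =>
      intro s ω
      rw [hXrec s (j + 1) ω, hXrec s j ω]
      calc ‖Fmap (χ s) (ε2 s ω) (Xtil (s - 1) (j + 1) ω) -
              Fmap (χ s) (ε2 s ω) (Xtil (s - 1) j ω)‖
          ≤ ρ * ‖Xtil (s - 1) (j + 1) ω - Xtil (s - 1) j ω‖ := hcontr _ _ _ _
        _ ≤ ρ * (ρ ^ j * (C * (1 + |ε2 (s - 1 - j) ω|))) :=
            mul_le_mul_of_nonneg_left (ih (s - 1) ω) hρ0.le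
        _ = ρ ^ (j + 1) * (C * (1 + |ε2 (s - (j + 1 : ℕ)) ω|)) := by
            have : (s - 1 - (j : ℤ)) = s - ((j + 1 : ℕ) : ℤ) := by push_cast; ring
            rw [this]; ring
  -- integrability bookkeeping
  have hE : ∫⁻ ω, ENNReal.ofReal |ε2 0 ω| ∂μ < ⊤ := by
    have := hint.hasFiniteIntegral
    rw [hasFiniteIntegral_iff_norm] at this
    simpa [Real.norm_eq_abs] using this
  have hid : ∀ s : ℤ, ∫⁻ ω, ENNReal.ofReal |ε2 s ω| ∂μ = ∫⁻ ω, ENNReal.ofReal |ε2 0 ω| ∂μ := by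
    intro s
    have hg : Measurable fun y : ℝ => ENNReal.ofReal |y| :=
      (measurable_abs).ennreal_ofReal
    rw [← lintegral_map hg (hmeas s), hident s, lintegral_map hg (hmeas 0)]
  -- a.e. summability of the bound series
  have hget : ∀ j : ℕ, Measurable fun ω => ENNReal.ofReal (ρ ^ j * (C * (1 + |ε2 (t - j) ω|))) := by
    intro j
    exact (measurable_const.mul ((measurable_const.mul
      (measurable_const.add (hmeas (t - j)).abs)))).ennreal_ofReal
  have hsum : ∀ᵐ ω ∂μ, ∑' j : ℕ, ENNReal.ofReal (ρ ^ j * (C * (1 + |ε2 (t - j) ω|))) < ⊤ := by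
    apply ae_lt_top (Measurable.ennreal_tsum hget)
    rw [lintegral_tsum (fun j => (hget j).aemeasurable)]
    have hterm : ∀ j : ℕ, ∫⁻ ω, ENNReal.ofReal (ρ ^ j * (C * (1 + |ε2 (t - j) ω|))) ∂μ =
        ENNReal.ofReal (ρ ^ j) * (ENNReal.ofReal C *
          (1 + ∫⁻ ω, ENNReal.ofReal |ε2 0 ω| ∂μ)) := by
      intro j
      have h1 : ∀ ω, ENNReal.ofReal (ρ ^ j * (C * (1 + |ε2 (t - j) ω|))) =
          ENNReal.ofReal (ρ ^ j) * (ENNReal.ofReal C * (1 + ENNReal.ofReal |ε2 (t - j) ω|)) := by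
        intro ω
        rw [ENNReal.ofReal_mul (by positivity), ENNReal.ofReal_mul hC.le,
          ENNReal.ofReal_add zero_le_one (abs_nonneg _), ENNReal.ofReal_one]
      simp only [h1]
      have hm : Measurable fun ω => (1 : ENNReal) + ENNReal.ofReal |ε2 (t - j) ω| :=
        measurable_const.add (hmeas (t - j)).abs.ennreal_ofReal
      rw [lintegral_const_mul _ (hm.const_mul _), lintegral_const_mul _ hm,
        lintegral_add_left measurable_const, lintegral_const, measure_univ, mul_one, hid]
    simp only [hterm]
    rw [ENNReal.tsum_mul_right]
    have hgeo : (∑' j : ℕ, ENNReal.ofReal (ρ ^ j)) ≠ ⊤ := by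
      have : ∀ j : ℕ, ENNReal.ofReal (ρ ^ j) = (ENNReal.ofReal ρ) ^ j := fun j =>
        ENNReal.ofReal_pow hρ0.le j
      simp only [this]
      rw [ENNReal.tsum_geometric]
      refine ENNReal.inv_ne_top.mpr fun h => ?_
      exact absurd (ENNReal.one_le_ofReal.mp (tsub_eq_zero_iff_le.mp h)) (not_le.mpr hρ1)
    exact (ENNReal.mul_lt_top (lt_top_iff_ne_top.mpr hgeo)
      (ENNReal.mul_lt_top ENNReal.ofReal_lt_top
        (ENNReal.add_lt_top.mpr ⟨ENNReal.one_lt_top, hE⟩))).ne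
  filter_upwards [hsum] with ω hω
  -- summability of the real bound
  have ha : Summable fun j : ℕ => ρ ^ j * (C * (1 + |ε2 (t - j) ω|)) := by
    have h1 := ENNReal.summable_toReal hω.ne
    refine h1.congr fun j => ?_
    rw [ENNReal.toReal_ofReal (by positivity)]
  -- summability of the differences
  have hd : Summable fun j : ℕ => Xtil t (j + 1) ω - Xtil t j ω :=
    Summable.of_norm_bounded ha fun j => key j t ω
  -- telescoping
  have htel : ∀ n : ℕ, Xtil t n ω =
      x + ∑ i ∈ Finset.range n, (Xtil t (i + 1) ω - Xtil t i ω) := by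
    intro n
    induction n with
    | zero => simp [hX0]
    | succ n ih => rw [Finset.sum_range_succ, ← add_assoc, ← ih]; abel
  refine ⟨x + ∑' j : ℕ, (Xtil t (j + 1) ω - Xtil t j ω), ?_⟩
  have := (tendsto_const_nhds (x := x)).add hd.hasSum.tendsto_sum_nat
  exact this.congr fun n => (htel n).symm
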